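/- arXiv:1601.04585 — 3 statements merged into one kernel-verified Lean document; each statement's English description precedes it below -/
import Mathlib

section
/- In a triangle T,B,L where |TB| = h, the distance from L to the line TB is a_l with a_l ≥ w/2, h ≥ w > 0, and the angles at T and at B are each at most 90°, every one of the three heights (altitudes) of the triangle has length at least w/√5. -/
open EuclideanGeometry Metric

local notation "E" => EuclideanSpace ℝ (Fin 3)
local notation "⟪" x ", " y "⟫" => @inner ℝ _ _ x y

private lemma mem_line {p q y : E} (hy : y ∈ affineSpan ℝ ({p, q} : Set E)) :
    ∃ t : ℝ, y = p + t • (q - p) := by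
  have hd := AffineSubspace.vsub_mem_direction hy (left_mem_affineSpan_pair ℝ p q)
  rw [direction_affineSpan, vectorSpan_pair_rev] at hd
  obtain ⟨t, ht⟩ := Submodule.mem_span_singleton.1 hd
  refine ⟨t, ?_⟩
  rw [vsub_eq_sub, vsub_eq_sub] at ht
  rw [ht]; abel

private lemma infDist_line_ge {p q x : E} {c : ℝ} (hc : 0 ≤ c)
    (H : ∀ t : ℝ, c ^ 2 ≤ ‖x - (p + t • (q - p))‖ ^ 2) :
    c ≤ Metric.infDist x (affineSpan ℝ ({p, q} : Set E) : Set E) := by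
  by_contra hlt
  push_neg at hlt
  have hne : ((affineSpan ℝ ({p, q} : Set E)) : Set E).Nonempty :=
    ⟨p, left_mem_affineSpan_pair ℝ p q⟩
  obtain ⟨y, hy, hdy⟩ := (Metric.infDist_lt_iff hne).1 hlt
  obtain ⟨t, rfl⟩ := mem_line hy
  rw [dist_eq_norm] at hdy
  have h2 := H t
  nlinarith [norm_nonneg (x - (p + t • (q - p)))]

private lemma norm_sub_smul_sq (a b : E) (s : ℝ) :
    ‖a - s • b‖ ^ 2 = ‖a‖ ^ 2 - 2 * s * ⟪a, b⟫ + s ^ 2 * ‖b‖ ^ 2 := by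
  rw [norm_sub_sq_real, real_inner_smul_right, norm_smul]
  rw [mul_pow, Real.norm_eq_abs, sq_abs]
  ring

private lemma scalar_key (h w P n2 t : ℝ) (hw : 0 < w) (hhw : w ≤ h) (h1 : 0 ≤ P)
    (h2 : P ≤ h ^ 2) (h3 : h ^ 2 * w ^ 2 / 4 ≤ h ^ 2 * n2 - P ^ 2) :
    w ^ 2 / 5 ≤ h ^ 2 - 2 * t * P + t ^ 2 * n2 := by
  have hh : 0 < h := lt_of_lt_of_le hw hhw
  have hh2 : 0 < h ^ 2 := by positivity
  have hn2 : 0 < n2 := by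
    by_contra hx
    push_neg at hx
    nlinarith [mul_nonneg hh2.le (neg_nonneg.2 hx), sq_nonneg P,
      mul_pos (mul_pos hh2 hw) hw]
  by_contra hG
  push_neg at hG
  have hc : 0 < 5 * h ^ 2 * n2 := by positivity
  have hneg : 5 * h ^ 2 * n2 * (h ^ 2 - 2 * t * P + t ^ 2 * n2 - w ^ 2 / 5) < 0 :=
    mul_neg_of_pos_of_neg hc (by linarith)
  have t1 : 0 ≤ 5 * h ^ 2 * (t * n2 - P) ^ 2 := by positivity
  have t2 : 0 ≤ (h ^ 2 * n2 - P ^ 2 - h ^ 2 * w ^ 2 / 4) * (5 * h ^ 2 - w ^ 2) :=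
    mul_nonneg (by linarith) (by nlinarith)
  have t3 : 0 ≤ w ^ 2 * (h ^ 4 - P ^ 2) :=
    mul_nonneg (sq_nonneg w)
      (by nlinarith [mul_nonneg (sub_nonneg.2 h2) (show (0:ℝ) ≤ h ^ 2 + P by linarith)])
  have t4 : 0 ≤ w ^ 2 * h ^ 2 * (h ^ 2 - w ^ 2) / 4 :=
    div_nonneg (mul_nonneg (mul_nonneg (sq_nonneg w) (sq_nonneg h)) (by nlinarith)) (by norm_num)
  have key : 5 * h ^ 2 * n2 * (h ^ 2 - 2 * t * P + t ^ 2 * n2 - w ^ 2 / 5) =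
      5 * h ^ 2 * (t * n2 - P) ^ 2
        + (h ^ 2 * n2 - P ^ 2 - h ^ 2 * w ^ 2 / 4) * (5 * h ^ 2 - w ^ 2)
        + w ^ 2 * (h ^ 4 - P ^ 2) + w ^ 2 * h ^ 2 * (h ^ 2 - w ^ 2) / 4 := by ring
  linarith [key ▸ hneg]

set_option maxHeartbeats 1000000 in
theorem stmt_7 (T B L : EuclideanSpace ℝ (Fin 3)) (h w a_l : ℝ)
    (hh : dist T B = h)
    (hal : Metric.infDist L (affineSpan ℝ {T, B} : Set (EuclideanSpace ℝ (Fin 3))) = a_l)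
    (hal2 : a_l ≥ w / 2) (hhw : h ≥ w) (hw : 0 < w)
    (hangT : EuclideanGeometry.angle B T L ≤ Real.pi / 2)
    (hangB : EuclideanGeometry.angle T B L ≤ Real.pi / 2) :
    Metric.infDist L (affineSpan ℝ {T, B} : Set (EuclideanSpace ℝ (Fin 3))) ≥ w / Real.sqrt 5 ∧
    Metric.infDist T (affineSpan ℝ {B, L} : Set (EuclideanSpace ℝ (Fin 3))) ≥ w / Real.sqrt 5 ∧
    Metric.infDist B (affineSpan ℝ {T, L} : Set (EuclideanSpace ℝ (Fin 3))) ≥ w / Real.sqrt 5 := by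
  have hs5 : (2 : ℝ) ≤ Real.sqrt 5 := by
    nlinarith [Real.sq_sqrt (show (0:ℝ) ≤ 5 by norm_num), Real.sqrt_nonneg 5]
  have hs5pos : (0 : ℝ) < Real.sqrt 5 := by linarith
  have hc0 : (0 : ℝ) ≤ w / Real.sqrt 5 := by positivity
  have hcsq : (w / Real.sqrt 5) ^ 2 = w ^ 2 / 5 := by
    rw [div_pow, Real.sq_sqrt (by norm_num : (0:ℝ) ≤ 5)]
  have hwc : w / Real.sqrt 5 ≤ w / 2 := by
    apply div_le_div_of_nonneg_left hw.le (by norm_num) hs5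
  have hhpos : 0 < h := lt_of_lt_of_le hw hhw
  -- basic quantities
  set u : E := B - T with hu
  set v : E := L - T with hv
  have hnu : ‖u‖ = h := by rw [hu, ← hh, dist_eq_norm, ← norm_neg]; congr 1; abel
  have hnu2 : ‖u‖ ^ 2 = h ^ 2 := by rw [hnu]
  set P : ℝ := ⟪u, v⟫ with hP
  set n2 : ℝ := ‖v‖ ^ 2 with hn2def
  have hn2nn : 0 ≤ n2 := by positivity
  -- angle at T gives 0 ≤ P
  have hPi0 : 0 ≤ P := by
    have h1 : InnerProductGeometry.angle u v ≤ Real.pi / 2 := hangT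
    have h2 : 0 ≤ Real.cos (InnerProductGeometry.angle u v) :=
      Real.cos_nonneg_of_mem_Icc ⟨by linarith [InnerProductGeometry.angle_nonneg u v,
        Real.pi_pos], h1⟩
    rw [hP, ← InnerProductGeometry.cos_angle_mul_norm_mul_norm]
    exact mul_nonneg h2 (by positivity)
  -- angle at B gives P ≤ h^2
  have hPih : P ≤ h ^ 2 := by
    have h1 : InnerProductGeometry.angle (T - B) (L - B) ≤ Real.pi / 2 := hangB
    have h2 : 0 ≤ Real.cos (InnerProductGeometry.angle (T - B) (L - B)) :=
      Real.cos_nonneg_of_mem_Icc ⟨by linarith [InnerProductGeometry.angle_nonneg (T - B) (L - B),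
        Real.pi_pos], h1⟩
    have h3 : 0 ≤ ⟪T - B, L - B⟫ := by
      rw [← InnerProductGeometry.cos_angle_mul_norm_mul_norm]
      exact mul_nonneg h2 (by positivity)
    have h4 : ⟪T - B, L - B⟫ = ‖u‖ ^ 2 - P := by
      have e1 : T - B = -u := by rw [hu]; abel
      have e2 : L - B = v - u := by rw [hu, hv]; abel
      rw [e1, e2, inner_neg_left, inner_sub_right, real_inner_self_eq_norm_sq, hP]
      ring
    rw [h4, hnu2] at h3
    linarith
  -- a_l bound gives h^2 * w^2 / 4 ≤ h^2 * n2 - P^2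
  have hFmem : (P / h ^ 2) • (B -ᵥ T) +ᵥ T ∈ affineSpan ℝ ({T, B} : Set E) :=
    smul_vsub_vadd_mem_affineSpan_pair _ _ _
  have halle : a_l ≤ ‖v - (P / h ^ 2) • u‖ := by
    rw [← hal]
    have := Metric.infDist_le_dist_of_mem (x := L) hFmem
    rw [dist_eq_norm] at this
    have e : v - (P / h ^ 2) • u = L - ((P / h ^ 2) • (B -ᵥ T) +ᵥ T) := by
      rw [hv, hu, vsub_eq_sub, vadd_eq_add]
      abel
    rw [e]; exact this
  have h3 : h ^ 2 * w ^ 2 / 4 ≤ h ^ 2 * n2 - P ^ 2 := by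
    have hw2 : w / 2 ≤ ‖v - (P / h ^ 2) • u‖ := le_trans hal2 halle
    have hsq : w ^ 2 / 4 ≤ ‖v - (P / h ^ 2) • u‖ ^ 2 := by
      nlinarith [norm_nonneg (v - (P / h ^ 2) • u)]
    rw [norm_sub_smul_sq, hnu2, real_inner_comm u v] at hsq
    have hh2 : (0:ℝ) < h ^ 2 := by positivity
    have : w ^ 2 / 4 ≤ n2 - P ^ 2 / h ^ 2 := by
      rw [← hP, ← hn2def] at hsq
      have : n2 - 2 * (P / h ^ 2) * P + (P / h ^ 2) ^ 2 * h ^ 2 = n2 - P ^ 2 / h ^ 2 := by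
        field_simp; ring
      linarith [this ▸ hsq]
    have := mul_le_mul_of_nonneg_left this hh2.le
    calc h ^ 2 * w ^ 2 / 4 = h ^ 2 * (w ^ 2 / 4) := by ring
      _ ≤ h ^ 2 * (n2 - P ^ 2 / h ^ 2) := this
      _ = h ^ 2 * n2 - P ^ 2 := by field_simp; try ring
  refine ⟨?_, ?_, ?_⟩
  · rw [hal]; linarith
  · -- altitude from T to line B L
    apply infDist_line_ge hc0
    intro t
    rw [hcsq]
    have e : T - (B + t • (L - B)) = (-u) - t • (v - u) := by
      rw [hu, hv]; module
    rw [e]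
    have hvu2 : ‖v - u‖ ^ 2 = n2 - 2 * P + h ^ 2 := by
      rw [norm_sub_sq_real, hnu2, real_inner_comm u v, hP, hn2def]
    have expand : ‖(-u) - t • (v - u)‖ ^ 2 =
        h ^ 2 - 2 * t * (h ^ 2 - P) + t ^ 2 * (n2 - 2 * P + h ^ 2) := by
      rw [norm_sub_smul_sq, norm_neg, hnu2, inner_neg_left, inner_sub_right,
        real_inner_self_eq_norm_sq, hnu2, hvu2]
      simp only [hP, hn2def]
      ring
    rw [expand]
    have := scalar_key h w (h ^ 2 - P) (n2 - 2 * P + h ^ 2) t hw hhw (by linarith)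
      (by linarith) (by nlinarith)
    linarith
  · -- altitude from B to line T L
    apply infDist_line_ge hc0
    intro t
    rw [hcsq]
    have e : B - (T + t • (L - T)) = u - t • v := by rw [hu, hv]; module
    rw [e]
    have expand : ‖u - t • v‖ ^ 2 = h ^ 2 - 2 * t * P + t ^ 2 * n2 := by
      rw [norm_sub_smul_sq, hnu2]
      try simp only [hP, hn2def]
      try ring
    rw [expand]
    exact scalar_key h w P n2 t hw hhw hPi0 hPih h3
end

section
/- For the function f(c,ε) = 2c/((1−ε)(c−1)) + c/ε defined for c > 1 and 0 < ε < 1, the values c = 2^{1/3}+1 and ε = (4^{1/3} − 2^{1/3} + 1)/3 yield f(c,ε) = 3/(2^{1/3} − 1), and this is the minimum of f over its domain. -/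
lemma key_ineq (t c ε : ℝ) (ht3 : t^3 = 2) (ht : 5/4 < t) (ht' : t < 13/10)
    (hc : 1 < c) (hε0 : 0 < ε) (hε1 : ε < 1) :
    3*(t^2+t+1) * ((1-ε)*(c-1)*ε) ≤ 2*c*ε + (1-ε)*(c-1)*c := by
  obtain ⟨u, rfl⟩ : ∃ u, c = 1 + u := ⟨c - 1, by ring⟩
  have hu0 : 0 < u := by linarith
  set b : ℝ := 1 + ε - 3*(t^2+t+1)*ε*(1-ε) with hb
  have hP : 2*(1+u)*ε + (1-ε)*((1+u)-1)*(1+u) - 3*(t^2+t+1) * ((1-ε)*((1+u)-1)*ε)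
      = (1-ε)*u^2 + b*u + 2*ε := by rw [hb]; ring
  rcases le_or_gt 0 b with hb0 | hb0
  · nlinarith [hP, mul_nonneg hb0 hu0.le, mul_pos (mul_pos (by linarith : (0:ℝ) < 1-ε) hu0) hu0]
  · have hε56 : ε < 5/6 := by
      by_contra h
      push_neg at h
      have h1 : 0 ≤ (ε - 5/6) * (1 - ε) := by
        apply mul_nonneg <;> linarith
      nlinarith [sq_nonneg t, sq_nonneg (t-1)]
    have h8 : 0 ≤ 8 + t + 3*t^2 - (6 + 3*t + 3*t^2)*ε := by
      nlinarith [sq_nonneg t, mul_nonneg (by nlinarith [sq_nonneg t] : (0:ℝ) ≤ 6 + 3*t + 3*t^2) (by linarith : (0:ℝ) ≤ 5/6 - ε)]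
    have hr : 0 ≤ -1 + (10 + 4*t + 6*t^2)*ε - (9 + 6*t + 6*t^2)*ε^2 := by
      nlinarith [mul_nonneg hε0.le h8]
    have hid : 4*(1-ε)*((1-ε)*u^2 + b*u + 2*ε)
        = (2*(1-ε)*u + b)^2
          + ((t+1)*ε - 1)^2 * (-1 + (10 + 4*t + 6*t^2)*ε - (9 + 6*t + 6*t^2)*ε^2) := by
      rw [hb]
      linear_combination (-3*t*ε^4 + 12*t*ε^3 - 9*t*ε^2 + 8*ε^3 - 6*ε^2) * ht3
    nlinarith [hP, hid, sq_nonneg (2*(1-ε)*u + b),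
      mul_nonneg (sq_nonneg ((t+1)*ε - 1)) hr]

theorem stmt_12 :
    (∀ c ε : ℝ, 1 < c → 0 < ε → ε < 1 →
      2 * c / ((1 - ε) * (c - 1)) + c / ε ≥ 3 / ((2 : ℝ) ^ ((1 : ℝ) / 3) - 1)) ∧
    (2 * ((2 : ℝ) ^ ((1 : ℝ) / 3) + 1) /
        ((1 - ((4 : ℝ) ^ ((1 : ℝ) / 3) - (2 : ℝ) ^ ((1 : ℝ) / 3) + 1) / 3) *
          (((2 : ℝ) ^ ((1 : ℝ) / 3) + 1) - 1)) +
      ((2 : ℝ) ^ ((1 : ℝ) / 3) + 1) /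
        (((4 : ℝ) ^ ((1 : ℝ) / 3) - (2 : ℝ) ^ ((1 : ℝ) / 3) + 1) / 3) =
      3 / ((2 : ℝ) ^ ((1 : ℝ) / 3) - 1)) := by
  set t : ℝ := (2 : ℝ) ^ ((1 : ℝ) / 3) with htdef
  have ht0 : 0 < t := by rw [htdef]; positivity
  have ht3 : t ^ 3 = 2 := by
    rw [htdef, ← Real.rpow_natCast _ 3, ← Real.rpow_mul (by norm_num)]
    norm_num
  have ht : 5/4 < t := by
    by_contra h
    push_neg at h
    have := pow_le_pow_left₀ ht0.le h 3
    rw [ht3] at this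
    norm_num at this
  have ht' : t < 13/10 := by
    by_contra h
    push_neg at h
    have := pow_le_pow_left₀ (by norm_num : (0:ℝ) ≤ 13/10) h 3
    rw [ht3] at this
    norm_num at this
  have h4 : (4 : ℝ) ^ ((1 : ℝ) / 3) = t ^ 2 := by
    rw [htdef, ← Real.rpow_natCast _ 2, ← Real.rpow_mul (by norm_num),
      show (4:ℝ) = 2 ^ (2:ℝ) by norm_num, ← Real.rpow_mul (by norm_num)]
    norm_num
  have hrhs : 3 / (t - 1) = 3 * (t^2 + t + 1) := by
    rw [div_eq_iff (by nlinarith : t - 1 ≠ 0)]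
    nlinarith [ht3]
  constructor
  · intro c ε hc hε0 hε1
    rw [ge_iff_le, hrhs]
    have h1 : (0:ℝ) < (1 - ε) * (c - 1) := by
      apply mul_pos <;> linarith
    rw [div_add_div _ _ h1.ne' hε0.ne', le_div_iff₀ (by positivity)]
    have := key_ineq t c ε ht3 ht ht' hc hε0 hε1
    nlinarith [this]
  · rw [h4, hrhs]
    have hd1 : (1 - (t ^ 2 - t + 1) / 3) * (t + 1 - 1) = t^2 * (t^2 - t + 1) / 3 := by
      have : (1 - (t ^ 2 - t + 1) / 3) * (t + 1 - 1) = t * (2 + t - t^2) / 3 := by ring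
      rw [this]
      have h2 : 2 + t - t^2 = t * (t^2 - t + 1) := by linear_combination -ht3
      rw [h2]; ring
    rw [hd1]
    have hq : (0:ℝ) < t^2 - t + 1 := by nlinarith
    have hne : t^2 * (t^2 - t + 1) / 3 ≠ 0 := by positivity
    have hne2 : (t^2 - t + 1) / 3 ≠ 0 := by positivity
    field_simp
    rw [div_eq_iff (by nlinarith)]
    linear_combination (-(t^3+1) - t) * ht3
end

section
/- Suppose unit vector g = (x,y,z) ∈ ℝ³ and positive reals h, d, k, l, h_V, h_WU satisfy h ≥ d, k ≥ d/8, l ≥ d/4, 0 ≤ h_V ≤ h, |h_WU| ≤ h. Then at least one of the quantities |h·z|, |k·x + h_V·z|, |−k·x + (h−h_V)·z|, |l·y + h_WU·z| is at least d/(8√3). -/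
theorem stmt_16 (x y z h d k l h_V h_WU : ℝ)
    (hg : x ^ 2 + y ^ 2 + z ^ 2 = 1)
    (hd : 0 < d) (hhd : h ≥ d) (hk : k ≥ d / 8) (hl : l ≥ d / 4)
    (hV0 : 0 ≤ h_V) (hVh : h_V ≤ h) (hWU : |h_WU| ≤ h) :
    |h * z| ≥ d / (8 * Real.sqrt 3) ∨
    |k * x + h_V * z| ≥ d / (8 * Real.sqrt 3) ∨
    |(-k) * x + (h - h_V) * z| ≥ d / (8 * Real.sqrt 3) ∨
    |l * y + h_WU * z| ≥ d / (8 * Real.sqrt 3) := by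
  set ε := d / (8 * Real.sqrt 3) with hεdef
  have hs3 : (0:ℝ) < Real.sqrt 3 := Real.sqrt_pos.mpr (by norm_num)
  have hs3sq : (Real.sqrt 3) ^ 2 = 3 := Real.sq_sqrt (by norm_num)
  have hε : 0 < ε := div_pos hd (by positivity)
  have hε2 : ε ^ 2 = d ^ 2 / 192 := by
    rw [hεdef, div_pow, mul_pow, hs3sq]; ring
  by_contra hcon
  push_neg at hcon
  obtain ⟨h1, h2, h3, h4⟩ := hcon
  set A := k * x + h_V * z with hA
  set B := (-k) * x + (h - h_V) * z with hB
  have hAB : A + B = h * z := by rw [hA, hB]; ring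
  -- bound on z
  have hh0 : 0 < h := lt_of_lt_of_le hd hhd
  have hz1 : h * |z| < ε := by rw [← abs_of_pos hh0, ← abs_mul]; exact h1
  have hzd : d * |z| < ε := lt_of_le_of_lt
    (mul_le_mul_of_nonneg_right hhd (abs_nonneg z)) hz1
  -- key: |A - B| + |A + B| < 2ε
  have h2' := abs_lt.mp h2
  have h3' := abs_lt.mp h3
  have hkey : |A - B| + |A + B| < 2 * ε := by
    rcases abs_cases (A - B) with ⟨e1, _⟩ | ⟨e1, _⟩ <;>
      rcases abs_cases (A + B) with ⟨e2, _⟩ | ⟨e2, _⟩ <;> linarith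
  -- bound on x : |2 k x| ≤ |A - B| + |h - 2 h_V| * |z|
  have hx2 : 2 * k * x = (A - B) + (h - 2 * h_V) * z := by rw [hA, hB]; ring
  have habs2 : |h - 2 * h_V| ≤ h := abs_le.mpr ⟨by linarith, by linarith⟩
  have hkx : |2 * k * x| < 2 * ε := by
    rw [hx2]
    calc |(A - B) + (h - 2 * h_V) * z| ≤ |A - B| + |(h - 2 * h_V) * z| := abs_add_le _ _
      _ ≤ |A - B| + h * |z| := by
          rw [abs_mul]
          exact add_le_add_right (mul_le_mul_of_nonneg_right habs2 (abs_nonneg z)) _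
      _ < 2 * ε := by
          have he : h * |z| = |A + B| := by rw [hAB, abs_mul, abs_of_pos hh0]
          linarith
  have hkx' : k * |x| < ε := by
    rw [abs_mul, abs_mul] at hkx
    rw [abs_of_nonneg (by norm_num : (0:ℝ) ≤ (2:ℝ))] at hkx
    have hk0 : 0 < k := lt_of_lt_of_le (by linarith) hk
    rw [abs_of_pos hk0] at hkx
    linarith
  have hxd : d * |x| < 8 * ε := by
    have := mul_le_mul_of_nonneg_right hk (abs_nonneg x)
    linarith
  -- bound on y
  have hly : l * |y| < 2 * ε := by
    have e1 : l * y = (l * y + h_WU * z) + (- h_WU) * z := by ring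
    have hl0 : 0 < l := lt_of_lt_of_le (by linarith) hl
    have : |l * y| < 2 * ε := by
      rw [e1]
      calc |(l * y + h_WU * z) + (- h_WU) * z|
          ≤ |l * y + h_WU * z| + |(- h_WU) * z| := abs_add_le _ _
        _ ≤ |l * y + h_WU * z| + h * |z| := by
            rw [abs_mul, abs_neg]
            exact add_le_add_right (mul_le_mul_of_nonneg_right hWU (abs_nonneg z)) _
        _ < 2 * ε := by linarith
    rwa [abs_mul, abs_of_pos hl0] at this
  have hyd : d * |y| < 8 * ε := by
    have := mul_le_mul_of_nonneg_right hl (abs_nonneg y)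
    linarith
  -- final contradiction
  have hx2' : d ^ 2 * x ^ 2 < 64 * ε ^ 2 := by
    have h' : (d * |x|) ^ 2 < (8 * ε) ^ 2 := by
      apply pow_lt_pow_left₀ hxd (by positivity)
      norm_num
    calc d ^ 2 * x ^ 2 = (d * |x|) ^ 2 := by rw [mul_pow, sq_abs]
      _ < (8 * ε) ^ 2 := h'
      _ = 64 * ε ^ 2 := by ring
  have hy2' : d ^ 2 * y ^ 2 < 64 * ε ^ 2 := by
    have h' : (d * |y|) ^ 2 < (8 * ε) ^ 2 := by
      apply pow_lt_pow_left₀ hyd (by positivity)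
      norm_num
    calc d ^ 2 * y ^ 2 = (d * |y|) ^ 2 := by rw [mul_pow, sq_abs]
      _ < (8 * ε) ^ 2 := h'
      _ = 64 * ε ^ 2 := by ring
  have hz2' : d ^ 2 * z ^ 2 < ε ^ 2 := by
    have h' : (d * |z|) ^ 2 < ε ^ 2 := by
      apply pow_lt_pow_left₀ hzd (by positivity)
      norm_num
    calc d ^ 2 * z ^ 2 = (d * |z|) ^ 2 := by rw [mul_pow, sq_abs]
      _ < ε ^ 2 := h'
  have hsum : d ^ 2 * x ^ 2 + d ^ 2 * y ^ 2 + d ^ 2 * z ^ 2 = d ^ 2 := by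
    linear_combination d ^ 2 * hg
  have hd2 : 0 < d ^ 2 := by positivity
  linarith
end
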